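/- Let A be a commutative ring, d : A → A a derivation, and f_1, …, f_N ∈ A. For a ∈ A let m_a : A → A denote the multiplication operator x ↦ a·x, and define W_k := e_k(d + m_{f_1}, …, d + m_{f_N})(1) ∈ A for k = 0, …, N, where e_k is the k-th noncommutative elementary symmetric polynomial computed in the ring of additive endomorphisms of A. Then for every additive endomorphism D : A → A satisfying D ∘ m_a − m_a ∘ D = m_{d(a)} for all a ∈ A, and for every m with 1 ≤ m ≤ N, one has the identity of endomorphisms e_m(D + m_{f_1}, …, D + m_{f_N}) = ∑_{k=0}^{m} C(N-k, m-k) · m_{W_k} ∘ D^{m-k}. (This is Lemma 4.3 of the paper — the analogue of Molev's Proposition 12.4.4 — stated for an arbitrary operator D with the same commutation relations with multiplication operators as d; the paper applies it with D = ∂ − H_{(-1)}.) -/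

import Mathlib

/-- The `m`-th noncommutative elementary symmetric polynomial of the list
`[X_1, …, X_n]`: the sum over `n ≥ i_1 > i_2 > … > i_m ≥ 1` of
`X_{i_1} X_{i_2} ⋯ X_{i_m}` (factors in strictly decreasing order of index),
with `e_0 = 1`. -/
def ncE {R : Type*} [Semiring R] : ℕ → List R → R
  | 0, _ => 1
  | _ + 1, [] => 0
  | m + 1, x :: xs => ncE (m + 1) xs + ncE m xs * x

/-- The multiplication operator `x ↦ a * x`, as an additive endomorphism. -/
def mulEnd {A : Type*} [NonUnitalNonAssocSemiring A] (a : A) : AddMonoid.End A :=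
  AddMonoidHom.mulLeft a

section Aux

lemma ncE_zero {R : Type*} [Semiring R] (L : List R) : ncE 0 L = 1 := by cases L <;> rfl

lemma ncE_nil {R : Type*} [Semiring R] (m : ℕ) : ncE (m+1) ([] : List R) = 0 := rfl

lemma ncE_cons {R : Type*} [Semiring R] (m : ℕ) (x : R) (xs : List R) :
    ncE (m+1) (x :: xs) = ncE (m+1) xs + ncE m xs * x := rfl

lemma ncE_eq_zero {R : Type*} [Semiring R] (L : List R) :
    ∀ m : ℕ, L.length < m → ncE m L = 0 := by
  induction L with
  | nil =>
    intro m hm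
    cases m with
    | zero => omega
    | succ m => rfl
  | cons x xs ih =>
    intro m hm
    cases m with
    | zero => omega
    | succ m =>
      have hlen : xs.length + 1 = (x :: xs).length := rfl
      have l1 : xs.length < m + 1 := by omega
      have l2 : xs.length < m := by omega
      rw [ncE_cons, ih _ l1, ih _ l2, zero_mul, add_zero]

lemma choose_trick (a b i : ℕ) (h : i ≤ b) :
    a.choose b * b.choose i = a.choose i * (a - i).choose (b - i) := by
  rcases le_or_gt b a with hba | hab
  · exact Nat.choose_mul h
  · rw [Nat.choose_eq_zero_of_lt hab, zero_mul]
    rcases le_or_gt i a with hia | hai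
    · rw [Nat.choose_eq_zero_of_lt (by omega : a - i < b - i), mul_zero]
    · rw [Nat.choose_eq_zero_of_lt hai, zero_mul]

variable {A : Type*} [CommRing A]

lemma endExt {F G : AddMonoid.End A} (h : ∀ x, F x = G x) : F = G := AddMonoidHom.ext h

lemma end_add_apply (F G : AddMonoid.End A) (x : A) : (F + G) x = F x + G x := rfl
lemma end_mul_apply (F G : AddMonoid.End A) (x : A) : (F * G) x = F (G x) := rfl
lemma end_nsmul_apply (c : ℕ) (F : AddMonoid.End A) (x : A) : (c • F) x = c • F x := rfl
lemma end_zero_apply (x : A) : (0 : AddMonoid.End A) x = 0 := rfl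
lemma end_one_apply (x : A) : (1 : AddMonoid.End A) x = x := rfl

lemma end_sum_apply {ι : Type*} (s : Finset ι) (F : ι → AddMonoid.End A) (x : A) :
    (∑ i ∈ s, F i) x = ∑ i ∈ s, F i x := by
  classical
  induction s using Finset.cons_induction with
  | empty => simp [end_zero_apply]
  | cons a s ha ih => rw [Finset.sum_cons, Finset.sum_cons, end_add_apply, ih]

lemma end_nsmul_sum {ι : Type*} (c : ℕ) (s : Finset ι) (F : ι → AddMonoid.End A) :
    c • ∑ i ∈ s, F i = ∑ i ∈ s, c • F i := by
  classical
  induction s using Finset.cons_induction with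
  | empty => rw [Finset.sum_empty, Finset.sum_empty, nsmul_zero]
  | cons a s ha ih => rw [Finset.sum_cons, Finset.sum_cons, nsmul_add, ih]

lemma mulEnd_apply (a x : A) : mulEnd a x = a * x := rfl

lemma mulEnd_one : mulEnd (1 : A) = 1 := endExt fun x => one_mul x

lemma mulEnd_mul (a b : A) : mulEnd (a * b) = mulEnd a * mulEnd b :=
  endExt fun x => mul_assoc a b x

lemma mulEnd_add (a b : A) : mulEnd (a + b) = mulEnd a + mulEnd b :=
  endExt fun x => add_mul a b x

lemma mulEnd_zero : mulEnd (0 : A) = 0 := endExt fun x => zero_mul x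

lemma mulEnd_nsmul (c : ℕ) (a : A) : mulEnd (c • a) = c • mulEnd a :=
  endExt fun x => smul_mul_assoc c a x

lemma mulEnd_sum {ι : Type*} (s : Finset ι) (g : ι → A) :
    mulEnd (∑ i ∈ s, g i) = ∑ i ∈ s, mulEnd (g i) := endExt fun x => by
  rw [end_sum_apply]
  exact Finset.sum_mul (s := s) (f := g) (a := x)

lemma pow_mul_mulEnd (d D : AddMonoid.End A)
    (hc : ∀ b : A, D * mulEnd b = mulEnd b * D + mulEnd (d b)) (a : A) (j : ℕ) :
    D ^ j * mulEnd a
      = ∑ i ∈ Finset.range (j+1), (j.choose i) • (mulEnd ((d ^ i) a) * D ^ (j - i)) := by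
  induction j with
  | zero => simp
  | succ j ih =>
    rw [pow_succ', mul_assoc, ih, Finset.mul_sum]
    have step : ∀ i ∈ Finset.range (j+1),
        D * ((j.choose i) • (mulEnd ((d^i) a) * D^(j-i)))
          = (j.choose i) • (mulEnd ((d^i) a) * D^(j+1-i))
            + (j.choose i) • (mulEnd ((d^(i+1)) a) * D^(j-i)) := by
      intro i hi
      have hij : i ≤ j := Nat.lt_succ_iff.mp (Finset.mem_range.mp hi)
      have h1 : j + 1 - i = (j - i) + 1 := by omega
      have h2 : (d^(i+1)) a = d ((d^i) a) := by rw [pow_succ']; rfl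
      rw [mul_smul_comm, ← mul_assoc, hc ((d^i) a), add_mul, mul_assoc, ← pow_succ',
        ← h1, h2, nsmul_add]
    rw [Finset.sum_congr rfl step, Finset.sum_add_distrib]
    rw [Finset.sum_range_succ'
      (fun i => ((j+1).choose i) • (mulEnd ((d^i) a) * D^(j+1-i))) (j+1)]
    simp only [Nat.choose_succ_succ, add_smul, Nat.add_sub_add_right, Nat.choose_zero_right,
      one_smul, Nat.sub_zero]
    rw [Finset.sum_add_distrib]
    have h3 : (∑ i ∈ Finset.range (j+1), (j.choose (i+1)) • (mulEnd ((d^(i+1)) a) * D^(j-i)))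
          + mulEnd ((d^0) a) * D^(j+1)
        = ∑ i ∈ Finset.range (j+1), (j.choose i) • (mulEnd ((d^i) a) * D^(j+1-i)) := by
      have e1 := Finset.sum_range_succ'
        (fun i => (j.choose i) • (mulEnd ((d^i) a) * D^(j+1-i))) (j+1)
      have e2 := Finset.sum_range_succ
        (fun i => (j.choose i) • (mulEnd ((d^i) a) * D^(j+1-i))) (j+1)
      simp only [Nat.add_sub_add_right, Nat.sub_zero, Nat.choose_zero_right, one_smul,
        Nat.choose_succ_self, zero_smul, add_zero] at e1 e2
      rw [← e1, e2]
    rw [← h3]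
    abel

lemma d_one_eq_zero (d : AddMonoid.End A)
    (hd : ∀ a : A, d * mulEnd a - mulEnd a * d = mulEnd (d a)) : d (1 : A) = 0 := by
  have h := hd 1
  rw [mulEnd_one, mul_one, one_mul, sub_self] at h
  have h2 := congrArg (fun F : AddMonoid.End A => F (1 : A)) h
  simpa [mulEnd_apply, end_zero_apply] using h2.symm

lemma key (d : AddMonoid.End A)
    (hd : ∀ a : A, d * mulEnd a - mulEnd a * d = mulEnd (d a)) :
    ∀ (L : List A) (D : AddMonoid.End A),
      (∀ a : A, D * mulEnd a - mulEnd a * D = mulEnd (d a)) → ∀ m : ℕ,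
      ncE m (L.map fun b => D + mulEnd b)
        = ∑ k ∈ Finset.range (m+1), ((L.length - k).choose (m-k)) •
            (mulEnd ((ncE k (L.map fun b => d + mulEnd b)) (1:A)) * D ^ (m-k)) := by
  intro L
  induction L with
  | nil =>
    intro D hD m
    cases m with
    | zero => simp [ncE_zero, mulEnd_one]
    | succ m =>
      rw [List.map_nil, List.map_nil, ncE_nil]
      symm
      apply Finset.sum_eq_zero
      intro k hk
      have hk' : k ≤ m + 1 := Nat.lt_succ_iff.mp (Finset.mem_range.mp hk)
      rcases eq_or_lt_of_le hk' with he | hlt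
      · subst he
        rw [ncE_nil, end_zero_apply, mulEnd_zero, zero_mul, nsmul_zero]
      · have h0 : ((([] : List A)).length - k).choose (m+1-k) = 0 := by
          simp only [List.length_nil, Nat.zero_sub]
          exact Nat.choose_eq_zero_of_lt (by omega)
        rw [h0, zero_smul]
  | cons a xs ih =>
    intro D hD m
    have hcomm : ∀ b : A, D * mulEnd b = mulEnd b * D + mulEnd (d b) := by
      intro b
      have h := hD b
      rw [sub_eq_iff_eq_add] at h
      rw [h, add_comm]
    cases m with
    | zero => simp [ncE_zero, mulEnd_one]
    | succ m =>
      have hd1 : d (1:A) = 0 := d_one_eq_zero d hd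
      have F3 : ∀ k : ℕ, (ncE k (xs.map fun b => d + mulEnd b)) a
          = ∑ j ∈ Finset.range (k+1), ((xs.length - j).choose (k-j)) •
              ((ncE j (xs.map fun b => d + mulEnd b)) (1:A) * (d ^ (k-j)) a) := by
        intro k
        have h := ih d hd k
        have h2 := congrArg (fun F : AddMonoid.End A => F a) h
        simpa [end_sum_apply, end_nsmul_apply, end_mul_apply, mulEnd_apply] using h2
      have F2 : ∀ k : ℕ,
          (ncE (k+1) ((d + mulEnd a) :: xs.map fun b => d + mulEnd b)) (1:A)
          = (ncE (k+1) (xs.map fun b => d + mulEnd b)) (1:A)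
            + (ncE k (xs.map fun b => d + mulEnd b)) a := by
        intro k
        rw [ncE_cons, end_add_apply, end_mul_apply, end_add_apply, mulEnd_apply, hd1,
          mul_one, zero_add]
      -- shorthand: n = xs.length
      simp only [List.map_cons, List.length_cons, List.length_map]
      rw [ncE_cons, ih D hD (m+1), ih D hD m, mul_add]
      have claimD : (∑ k ∈ Finset.range (m+1), ((xs.length - k).choose (m-k)) •
            (mulEnd ((ncE k (xs.map fun b => d + mulEnd b)) (1:A)) * D ^ (m-k))) * D
          = ∑ k ∈ Finset.range (m+1), ((xs.length - k).choose (m-k)) •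
            (mulEnd ((ncE k (xs.map fun b => d + mulEnd b)) (1:A)) * D ^ (m+1-k)) := by
        rw [Finset.sum_mul]
        refine Finset.sum_congr rfl ?_
        intro k hk
        have hkm : k ≤ m := Nat.lt_succ_iff.mp (Finset.mem_range.mp hk)
        have h1 : m + 1 - k = (m - k) + 1 := by omega
        rw [smul_mul_assoc, mul_assoc, ← pow_succ, h1]
      have claimA : (∑ k ∈ Finset.range (m+1), ((xs.length - k).choose (m-k)) •
            (mulEnd ((ncE k (xs.map fun b => d + mulEnd b)) (1:A)) * D ^ (m-k))) * mulEnd a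
          = ∑ k ∈ Finset.range (m+1), ∑ i ∈ Finset.range (m-k+1),
              (((xs.length - k).choose (m-k)) * ((m-k).choose i)) •
                (mulEnd ((ncE k (xs.map fun b => d + mulEnd b)) (1:A) * (d^i) a)
                  * D ^ (m-k-i)) := by
        rw [Finset.sum_mul]
        refine Finset.sum_congr rfl ?_
        intro k hk
        rw [smul_mul_assoc, mul_assoc, pow_mul_mulEnd d D hcomm a (m-k), Finset.mul_sum,
          end_nsmul_sum]
        refine Finset.sum_congr rfl ?_
        intro i hi
        rw [mul_smul_comm, smul_smul, ← mul_assoc, ← mulEnd_mul]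
      have hR2 : (∑ k ∈ Finset.range (m+1), ((xs.length - k).choose (m-k)) •
            (mulEnd ((ncE k (xs.map fun b => d + mulEnd b)) a) * D ^ (m-k)))
          = ∑ k ∈ Finset.range (m+1), ∑ j ∈ Finset.range (k+1),
              (((xs.length - k).choose (m-k)) * ((xs.length - j).choose (k-j))) •
                (mulEnd ((ncE j (xs.map fun b => d + mulEnd b)) (1:A) * (d^(k-j)) a)
                  * D ^ (m-k)) := by
        refine Finset.sum_congr rfl ?_
        intro k hk
        rw [F3 k, mulEnd_sum, Finset.sum_mul, end_nsmul_sum]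
        refine Finset.sum_congr rfl ?_
        intro j hj
        rw [mulEnd_nsmul, smul_mul_assoc, smul_smul]
      have hswap : (∑ k ∈ Finset.range (m+1), ∑ i ∈ Finset.range (m-k+1),
              (((xs.length - k).choose (m-k)) * ((m-k).choose i)) •
                (mulEnd ((ncE k (xs.map fun b => d + mulEnd b)) (1:A) * (d^i) a)
                  * D ^ (m-k-i)))
          = ∑ k ∈ Finset.range (m+1), ∑ j ∈ Finset.range (k+1),
              (((xs.length - k).choose (m-k)) * ((xs.length - j).choose (k-j))) •
                (mulEnd ((ncE j (xs.map fun b => d + mulEnd b)) (1:A) * (d^(k-j)) a)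
                  * D ^ (m-k)) := by
        rw [Finset.sum_sigma', Finset.sum_sigma']
        refine Finset.sum_nbij' (fun p => ⟨p.1 + p.2, p.1⟩) (fun p => ⟨p.2, p.1 - p.2⟩)
          ?_ ?_ ?_ ?_ ?_
        · intro p hp
          simp only [Finset.mem_sigma, Finset.mem_range] at hp ⊢
          omega
        · intro p hp
          simp only [Finset.mem_sigma, Finset.mem_range] at hp ⊢
          omega
        · intro p hp
          simp only [Finset.mem_sigma, Finset.mem_range] at hp
          ext <;> simp
        · intro p hp
          simp only [Finset.mem_sigma, Finset.mem_range] at hp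
          ext <;> simp <;> omega
        · intro p hp
          simp only [Finset.mem_sigma, Finset.mem_range] at hp
          obtain ⟨hp1, hp2⟩ := hp
          have e1 : p.1 + p.2 - p.1 = p.2 := by omega
          have e2 : m - (p.1 + p.2) = m - p.1 - p.2 := by omega
          simp only [e1, e2]
          have hc : ((xs.length - p.1).choose (m - p.1)) * ((m - p.1).choose p.2)
              = ((xs.length - (p.1+p.2)).choose (m - p.1 - p.2))
                * ((xs.length - p.1).choose p.2) := by
            have ht := choose_trick (xs.length - p.1) (m - p.1) p.2 (by omega)
            have e3 : xs.length - p.1 - p.2 = xs.length - (p.1 + p.2) := by omega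
            rw [ht, mul_comm, e3]
          rw [hc]
      have hR1 : (∑ k ∈ Finset.range (m+2), ((xs.length - k).choose (m+1-k)) •
            (mulEnd ((ncE k (xs.map fun b => d + mulEnd b)) (1:A)) * D ^ (m+1-k)))
          + (∑ k ∈ Finset.range (m+1), ((xs.length - k).choose (m-k)) •
            (mulEnd ((ncE k (xs.map fun b => d + mulEnd b)) (1:A)) * D ^ (m+1-k)))
          = ∑ k ∈ Finset.range (m+2), ((xs.length + 1 - k).choose (m+1-k)) •
            (mulEnd ((ncE k (xs.map fun b => d + mulEnd b)) (1:A)) * D ^ (m+1-k)) := by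
        have e1 := Finset.sum_range_succ
          (fun k => ((xs.length - k).choose (m+1-k)) •
            (mulEnd ((ncE k (xs.map fun b => d + mulEnd b)) (1:A)) * D ^ (m+1-k))) (m+1)
        have e2 := Finset.sum_range_succ
          (fun k => ((xs.length + 1 - k).choose (m+1-k)) •
            (mulEnd ((ncE k (xs.map fun b => d + mulEnd b)) (1:A)) * D ^ (m+1-k))) (m+1)
        simp only [Nat.sub_self, Nat.choose_zero_right, pow_zero] at e1 e2
        rw [e1, e2, add_right_comm, ← Finset.sum_add_distrib]
        congr 1
        · refine Finset.sum_congr rfl ?_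
          intro k hk
          have hkm : k ≤ m := Nat.lt_succ_iff.mp (Finset.mem_range.mp hk)
          by_cases hkn : k ≤ xs.length
          · have ha1 : xs.length + 1 - k = (xs.length - k) + 1 := by omega
            have hb1 : m + 1 - k = (m - k) + 1 := by omega
            rw [ha1, hb1, Nat.choose_succ_succ, add_smul, add_comm]
          · have hW0 : ncE k (xs.map fun b => d + mulEnd b) = 0 :=
              ncE_eq_zero _ _ (by rw [List.length_map]; omega)
            rw [hW0, end_zero_apply, mulEnd_zero, zero_mul, nsmul_zero, nsmul_zero,
              nsmul_zero, add_zero]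
      have hRHS : (∑ k ∈ Finset.range (m+2), ((xs.length + 1 - k).choose (m+1-k)) •
            (mulEnd ((ncE k ((d + mulEnd a) :: xs.map fun b => d + mulEnd b)) (1:A))
              * D ^ (m+1-k)))
          = (∑ k ∈ Finset.range (m+2), ((xs.length + 1 - k).choose (m+1-k)) •
              (mulEnd ((ncE k (xs.map fun b => d + mulEnd b)) (1:A)) * D ^ (m+1-k)))
            + (∑ k ∈ Finset.range (m+1), ((xs.length - k).choose (m-k)) •
              (mulEnd ((ncE k (xs.map fun b => d + mulEnd b)) a) * D ^ (m-k))) := by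
        have e3 := Finset.sum_range_succ'
          (fun k => ((xs.length + 1 - k).choose (m+1-k)) •
            (mulEnd ((ncE k ((d + mulEnd a) :: xs.map fun b => d + mulEnd b)) (1:A))
              * D ^ (m+1-k))) (m+1)
        have e4 := Finset.sum_range_succ'
          (fun k => ((xs.length + 1 - k).choose (m+1-k)) •
            (mulEnd ((ncE k (xs.map fun b => d + mulEnd b)) (1:A)) * D ^ (m+1-k))) (m+1)
        simp only [Nat.add_sub_add_right, Nat.sub_zero] at e3 e4
        rw [e3, e4]
        have hsplit : ∀ k ∈ Finset.range (m+1),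
            ((xs.length - k).choose (m-k)) •
              (mulEnd ((ncE (k+1) ((d + mulEnd a) :: xs.map fun b => d + mulEnd b)) (1:A))
                * D ^ (m-k))
            = ((xs.length - k).choose (m-k)) •
                (mulEnd ((ncE (k+1) (xs.map fun b => d + mulEnd b)) (1:A)) * D ^ (m-k))
              + ((xs.length - k).choose (m-k)) •
                (mulEnd ((ncE k (xs.map fun b => d + mulEnd b)) a) * D ^ (m-k)) := by
          intro k hk
          rw [F2 k, mulEnd_add, add_mul, nsmul_add]
        rw [Finset.sum_congr rfl hsplit, Finset.sum_add_distrib]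
        have h00 : (ncE 0 ((d + mulEnd a) :: xs.map fun b => d + mulEnd b)) (1:A)
            = (ncE 0 (xs.map fun b => d + mulEnd b)) (1:A) := by
          rw [ncE_zero, ncE_zero]
        rw [h00]
        abel
      rw [hRHS, claimD, claimA, hswap, ← hR2, ← hR1]
      abel

end Aux

/-- **Lemma 4.3** (the analogue of Molev's Proposition 12.4.4): with
`W_k := e_k(d + m_{f_1}, …, d + m_{f_N})(1)`, for any additive endomorphism `D`
with `D ∘ m_a − m_a ∘ D = m_{d(a)}` and every `1 ≤ m ≤ N`, one has
`e_m(D + m_{f_1}, …, D + m_{f_N}) = ∑_{k=0}^{m} C(N-k, m-k) m_{W_k} ∘ D^{m-k}`. -/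
theorem stmt6 {A : Type*} [CommRing A] (N : ℕ) (d : AddMonoid.End A)
    (hd : ∀ a : A, d * mulEnd a - mulEnd a * d = mulEnd (d a))
    (f : Fin N → A) (D : AddMonoid.End A)
    (hD : ∀ a : A, D * mulEnd a - mulEnd a * D = mulEnd (d a))
    (m : ℕ) (hm1 : 1 ≤ m) (hm : m ≤ N) :
    ncE m (List.ofFn fun i => D + mulEnd (f i))
      = ∑ k ∈ Finset.range (m + 1),
          Nat.choose (N - k) (m - k) •
            (mulEnd ((ncE k (List.ofFn fun i => d + mulEnd (f i))) (1 : A)) * D ^ (m - k)) := by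
  have h := key d hd (List.ofFn f) D hD m
  have e1 : (List.ofFn f).map (fun b => D + mulEnd b) = List.ofFn fun i => D + mulEnd (f i) := by
    rw [List.map_ofFn]; rfl
  have e2 : (List.ofFn f).map (fun b => d + mulEnd b) = List.ofFn fun i => d + mulEnd (f i) := by
    rw [List.map_ofFn]; rfl
  rw [e1, e2, List.length_ofFn] at h
  exact h
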